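/- For each fixed nonnegative integer i, integer j ≥ 1, and every nonnegative integer n, the identity \sum_{k=0}^{i} q^{2k} \frac{(q^{j-1};q)_k}{(q;q)_k} \left( \sum_{\lambda=0}^{n} q^{\lambda} \frac{(q^{j+i};q)_{\lambda}}{(q^{1+i};q)_{\lambda}} \frac{1-q^{1+i+\lambda-k}}{1-q^{1+i+\lambda}} \right) = \frac{(q^{1+j};q)_{n+i}}{(q;q)_{n+i}} \cdot \frac{1-q^{1+n}}{1-q^{1+n+i}} holds. -/

import Mathlib

/-- The q-shifted factorial `(a;q)_n = ∏_{m<n} (1 - a q^m)`. -/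
noncomputable def qPoch (q a : ℝ) (n : ℕ) : ℝ := ∏ m ∈ Finset.range n, (1 - a * q ^ m)

/-- for fixed nonnegative integer i, integer j ≥ 1 and every n ≥ 0,
`∑_{k=0}^{i} q^{2k} (q^{j-1};q)_k/(q;q)_k
   (∑_{λ=0}^{n} q^λ (q^{j+i};q)_λ/(q^{1+i};q)_λ (1-q^{1+i+λ-k})/(1-q^{1+i+λ}))
 = (q^{1+j};q)_{n+i}/(q;q)_{n+i} · (1-q^{1+n})/(1-q^{1+n+i})`. -/
lemma qP_succ (q a : ℝ) (n : ℕ) : qPoch q a (n+1) = qPoch q a n * (1 - a * q^n) :=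
  Finset.prod_range_succ _ _

lemma qP_succ' (q a : ℝ) (n : ℕ) : qPoch q a (n+1) = (1 - a) * qPoch q (a*q) n := by
  unfold qPoch
  rw [Finset.prod_range_succ']
  simp only [pow_zero, mul_one]
  rw [mul_comm]
  congr 1
  exact Finset.prod_congr rfl fun m _ => by rw [pow_succ]; ring

lemma qP_pos {q : ℝ} (hq : 0 < q) (hq1 : q < 1) {a : ℝ} (ha0 : 0 ≤ a) (ha1 : a < 1) (n : ℕ) :
    0 < qPoch q a n := by
  apply Finset.prod_pos
  intro m _
  have h1 : q ^ m ≤ 1 := pow_le_one₀ hq.le hq1.le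
  nlinarith

section sums
variable {q : ℝ} (hq : 0 < q) (hq1 : q < 1)

include hq hq1

lemma qP_q_ne (n : ℕ) : qPoch q q n ≠ 0 :=
  (qP_pos hq hq1 hq.le hq1 n).ne'

lemma one_sub_ne {m : ℕ} (hm : 1 ≤ m) : 1 - q ^ m ≠ 0 := by
  have : q ^ m < 1 := pow_lt_one₀ hq.le hq1 (by omega)
  linarith

lemma sumA (a : ℝ) (i : ℕ) :
    ∑ k ∈ Finset.range (i+1), q^k * qPoch q a k / qPoch q q k
      = qPoch q (a*q) i / qPoch q q i := by
  induction i with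
  | zero => simp [qPoch]
  | succ i ih =>
    rw [Finset.sum_range_succ, ih, qP_succ q q i, qP_succ q (a*q) i, qP_succ' q a i]
    have h1 : qPoch q q i ≠ 0 := qP_q_ne hq hq1 i
    have h2 : 1 - q * q ^ i ≠ 0 := by
      have := one_sub_ne hq hq1 (m := i+1) (by omega); rw [pow_succ'] at this; exact this
    field_simp
    ring

lemma sumB (a : ℝ) (ha : 1 - a*q ≠ 0) (i : ℕ) :
    ∑ k ∈ Finset.range (i+1), q^k * (1 - q^k) * qPoch q a k / qPoch q q k
      = q * (1-a) * (1-q^i) * qPoch q (a*q) i / ((1 - a*q) * qPoch q q i) := by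
  induction i with
  | zero => simp [qPoch]
  | succ i ih =>
    rw [Finset.sum_range_succ, ih, qP_succ q q i, qP_succ q (a*q) i, qP_succ' q a i]
    have h1 : qPoch q q i ≠ 0 := qP_q_ne hq hq1 i
    have h2 : 1 - q * q ^ i ≠ 0 := by
      have := one_sub_ne hq hq1 (m := i+1) (by omega); rw [pow_succ'] at this; exact this
    have ha' : 1 - q*a ≠ 0 := by rwa [mul_comm q a]
    field_simp
    ring

lemma sumT1 (a b : ℝ) (hb0 : 0 ≤ b) (hb1 : b < 1) (hba : b - a ≠ 0) (n : ℕ) :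
    ∑ lam ∈ Finset.range (n+1), q^lam * qPoch q a lam / qPoch q b (lam+1)
      = (qPoch q a (n+1) - qPoch q b (n+1)) / ((b-a) * qPoch q b (n+1)) := by
  induction n with
  | zero =>
    have h1 : 1 - b ≠ 0 := by linarith
    simp only [Finset.sum_range_one, pow_zero, one_mul, zero_add, qPoch,
      Finset.prod_range_one, Finset.prod_range_zero, mul_one]
    field_simp
    try ring
  | succ n ih =>
    rw [Finset.sum_range_succ, ih, qP_succ q a (n+1), qP_succ q b (n+1)]
    have h1 : qPoch q b (n+1) ≠ 0 := (qP_pos hq hq1 hb0 hb1 (n+1)).ne'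
    have h2 : 1 - b * q ^ (n+1) ≠ 0 := by
      have hb : b * q^(n+1) < 1 := by
        have : q ^ (n+1) ≤ 1 := pow_le_one₀ hq.le hq1.le
        nlinarith
      linarith
    field_simp
    ring

lemma sumT0 (a b : ℝ) (hb0 : 0 ≤ b) (hb1 : b < 1) (hba : b - a*q ≠ 0) (n : ℕ) :
    ∑ lam ∈ Finset.range (n+1), q^lam * qPoch q a lam / qPoch q b lam
      = (b * qPoch q b (n+1) - b * q^(n+1) * qPoch q a (n+1)
          + q * qPoch q a (n+1) - q * qPoch q b (n+1)) / ((b - a*q) * qPoch q b (n+1)) := by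
  induction n with
  | zero =>
    have h1 : 1 - b ≠ 0 := by linarith
    simp only [Finset.sum_range_one, pow_zero, one_mul, zero_add, qPoch,
      Finset.prod_range_one, Finset.prod_range_zero, mul_one]
    have hba' : b - q*a ≠ 0 := by rwa [mul_comm q a]
    field_simp
    try ring
  | succ n ih =>
    rw [Finset.sum_range_succ, ih, qP_succ q a (n+1), qP_succ q b (n+1)]
    have h1 : qPoch q b (n+1) ≠ 0 := (qP_pos hq hq1 hb0 hb1 (n+1)).ne'
    have h2 : 1 - b * q ^ (n+1) ≠ 0 := by
      have hb : b * q^(n+1) < 1 := by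
        have : q ^ (n+1) ≤ 1 := pow_le_one₀ hq.le hq1.le
        nlinarith
      linarith
    have hba' : b - q*a ≠ 0 := by rwa [mul_comm q a]
    field_simp
    ring

end sums

lemma qP_add (q a : ℝ) (s t : ℕ) : qPoch q a (s+t) = qPoch q a s * qPoch q (a*q^s) t := by
  unfold qPoch
  rw [Finset.prod_range_add]
  congr 1
  exact Finset.prod_congr rfl fun m _ => by rw [pow_add]; ring

theorem double_finite_sum (q : ℝ) (hq : 0 < q) (hq1 : q < 1) (i j : ℕ) (hj : 1 ≤ j) (n : ℕ) :
    ∑ k ∈ Finset.range (i + 1),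
        q ^ (2 * k) * qPoch q (q ^ (j - 1)) k / qPoch q q k *
          (∑ lam ∈ Finset.range (n + 1),
            q ^ lam * qPoch q (q ^ (j + i)) lam / qPoch q (q ^ (1 + i)) lam *
              ((1 - q ^ (1 + i + lam - k)) / (1 - q ^ (1 + i + lam))))
      = qPoch q (q ^ (1 + j)) (n + i) / qPoch q q (n + i) *
          ((1 - q ^ (1 + n)) / (1 - q ^ (1 + n + i))) := by
  have hq0 : q ≠ 0 := ne_of_gt hq
  have hb0 : (0:ℝ) ≤ q^(1+i) := by positivity
  have hb1 : q^(1+i) < 1 := pow_lt_one₀ hq.le hq1 (by omega)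
  have hPbne : ∀ mm, qPoch q (q^(1+i)) mm ≠ 0 := fun mm => (qP_pos hq hq1 hb0 hb1 mm).ne'
  have hR2 : qPoch q q (n+i) * (1 - q^(1+n+i))
      = qPoch q q i * qPoch q (q^(1+i)) (n+1) := by
    have e3 : qPoch q q (i+(n+1)) = qPoch q q i * qPoch q (q^(1+i)) (n+1) := by
      rw [qP_add, show q * q^i = q^(1+i) by rw [← pow_succ']; congr 1; omega]
    have e4 : qPoch q q ((n+i)+1) = qPoch q q (n+i) * (1 - q^(1+n+i)) := by
      rw [qP_succ, show q * q^(n+i) = q^(1+n+i) by rw [← pow_succ']; congr 1; omega]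
    rw [← e4, ← e3]; congr 1; omega
  rcases eq_or_lt_of_le hj with hj1 | hj2
  · -- case j = 1
    subst hj1
    have hinner : ∀ lam ∈ Finset.range (n+1),
        q ^ lam * qPoch q (q ^ (1 + i)) lam / qPoch q (q ^ (1 + i)) lam *
          ((1 - q ^ (1 + i + lam - 0)) / (1 - q ^ (1 + i + lam))) = q ^ lam := by
      intro lam _
      rw [Nat.sub_zero, div_self (one_sub_ne hq hq1 (by omega)),
        mul_div_assoc, div_self (hPbne lam)]
      ring
    rw [Finset.sum_eq_single 0]
    · rw [Finset.sum_congr rfl hinner,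
        geom_sum_eq (by intro h; rw [h] at hq1; linarith) (n+1)]
      have h00 : qPoch q (q^(1-1)) 0 = 1 := by simp [qPoch]
      have h01 : qPoch q q 0 = 1 := by simp [qPoch]
      rw [h00, h01]
      norm_num
      have h1 : (1:ℝ) - q ≠ 0 := by linarith
      have h1' : q - 1 ≠ 0 := by linarith
      have h2 : 1 - q^(1+n+i) ≠ 0 := one_sub_ne hq hq1 (by omega)
      have h3 : qPoch q q (n+i) ≠ 0 := qP_q_ne hq hq1 _
      have e5 : (1 - q) * qPoch q (q^(1+1)) (n+i) = qPoch q q ((n+i)+1) := by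
        rw [qP_succ' q q (n+i)]; congr 2; ring
      have e6 : qPoch q q ((n+i)+1) = qPoch q q (n+i) * (1 - q^(1+n+i)) := by
        rw [qP_succ, show q * q^(n+i) = q^(1+n+i) by rw [← pow_succ']; congr 1; omega]
      have e7 : qPoch q (q^(1+1)) (n+i) = qPoch q q (n+i) * (1 - q^(1+n+i)) / (1-q) := by
        rw [eq_div_iff h1, ← e6, ← e5]; ring
      rw [e7]
      field_simp [h1, h1']
      ring
    · intro k hk hk0
      have : qPoch q (q^(1-1)) k = 0 := by
        rw [show (1:ℕ)-1 = 0 from rfl, pow_zero,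
          show k = (k-1)+1 from by omega, qP_succ' q 1 (k-1)]
        ring
      rw [this]
      ring
    · intro h; exact absurd (Finset.mem_range.mpr (by omega)) h
  · -- case 2 ≤ j
    obtain ⟨m, rfl⟩ : ∃ m, j = m+2 := ⟨j-2, by omega⟩
    simp only [show m+2-1 = m+1 from rfl]
    have hjne : 1 - q^(m+2) ≠ 0 := one_sub_ne hq hq1 (by omega)
    have hwne : 1 - q^(m+1) ≠ 0 := one_sub_ne hq hq1 (by omega)
    have hbane : q^(1+i) - q^(m+2+i) ≠ 0 := by
      have h : q^(m+2+i) = q^(1+i) * q^(m+1) := by rw [← pow_add]; congr 1; omega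
      rw [h, show q^(1+i) - q^(1+i)*q^(m+1) = q^(1+i)*(1 - q^(m+1)) by ring]
      exact mul_ne_zero (pow_ne_zero _ hq0) hwne
    have hbaqne : q^(1+i) - q^(m+2+i)*q ≠ 0 := by
      have h : q^(m+2+i)*q = q^(1+i) * q^(m+2) := by rw [← pow_succ, ← pow_add]; congr 1; omega
      rw [h, show q^(1+i) - q^(1+i)*q^(m+2) = q^(1+i)*(1 - q^(m+2)) by ring]
      exact mul_ne_zero (pow_ne_zero _ hq0) hjne
    set T0 : ℝ := ∑ lam ∈ Finset.range (n+1),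
      q^lam * qPoch q (q^(m+2+i)) lam / qPoch q (q^(1+i)) lam with hT0
    set T1 : ℝ := ∑ lam ∈ Finset.range (n+1),
      q^lam * qPoch q (q^(m+2+i)) lam / qPoch q (q^(1+i)) (lam+1) with hT1
    have key : ∀ k ∈ Finset.range (i+1),
        (∑ lam ∈ Finset.range (n+1), q^lam * qPoch q (q^(m+2+i)) lam / qPoch q (q^(1+i)) lam *
          ((1 - q^(1+i+lam-k)) / (1 - q^(1+i+lam))))
        = (1/q^k) * T0 - ((1-q^k)/q^k) * T1 := by
      intro k hk
      rw [Finset.mem_range] at hk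
      rw [hT0, hT1, Finset.mul_sum, Finset.mul_sum, ← Finset.sum_sub_distrib]
      refine Finset.sum_congr rfl fun lam _ => ?_
      have hMne : 1 - q^(1+i+lam) ≠ 0 := one_sub_ne hq hq1 (by omega)
      have hsucc : qPoch q (q^(1+i)) (lam+1) = qPoch q (q^(1+i)) lam * (1 - q^(1+i+lam)) := by
        rw [qP_succ, ← pow_add]
      have he : q^(1+i+lam-k) * q^k = q^(1+i+lam) := by
        rw [← pow_add]; congr 1; omega
      have hkne : (q:ℝ)^k ≠ 0 := pow_ne_zero _ hq0
      have hPl : qPoch q (q^(1+i)) lam ≠ 0 := hPbne lam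
      rw [hsucc]
      have h1 : (1:ℝ) - q^(1+i+lam-k) = (q^k - q^(1+i+lam))/q^k := by
        rw [eq_div_iff hkne]; linear_combination -he
      rw [h1]
      field_simp
      ring
    calc ∑ k ∈ Finset.range (i + 1),
        q ^ (2 * k) * qPoch q (q ^ (m+1)) k / qPoch q q k *
          (∑ lam ∈ Finset.range (n + 1),
            q ^ lam * qPoch q (q ^ (m+2+i)) lam / qPoch q (q ^ (1 + i)) lam *
              ((1 - q ^ (1 + i + lam - k)) / (1 - q ^ (1 + i + lam))))
        = ∑ k ∈ Finset.range (i+1),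
            (q^k * qPoch q (q^(m+1)) k / qPoch q q k * T0
              - q^k * (1-q^k) * qPoch q (q^(m+1)) k / qPoch q q k * T1) := by
          refine Finset.sum_congr rfl fun k hk => ?_
          rw [key k hk]
          have h1 : qPoch q q k ≠ 0 := qP_q_ne hq hq1 k
          have hkne : (q:ℝ)^k ≠ 0 := pow_ne_zero _ hq0
          rw [two_mul, pow_add]
          field_simp
      _ = (∑ k ∈ Finset.range (i+1), q^k * qPoch q (q^(m+1)) k / qPoch q q k) * T0
          - (∑ k ∈ Finset.range (i+1), q^k * (1-q^k) * qPoch q (q^(m+1)) k / qPoch q q k) * T1 := by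
          rw [Finset.sum_sub_distrib, Finset.sum_mul, Finset.sum_mul]
      _ = qPoch q (q ^ (1 + (m+2))) (n + i) / qPoch q q (n + i) *
          ((1 - q ^ (1 + n)) / (1 - q ^ (1 + n + i))) := by
          have hw : q^(m+1) * q = q^(m+2) := by rw [← pow_succ]
          rw [sumA hq hq1, sumB hq hq1 _ (by rw [hw]; exact hjne),
            hT0, hT1,
            sumT0 hq hq1 (q^(m+2+i)) (q^(1+i)) hb0 hb1 hbaqne n,
            sumT1 hq hq1 (q^(m+2+i)) (q^(1+i)) hb0 hb1 hbane n,
            hw]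
          have hR1 : (1 - q^(m+2)) * qPoch q (q^(1+(m+2))) (n+i)
              = qPoch q (q^(m+2)) i * qPoch q (q^(m+2+i)) (n+1) := by
            have e1 : qPoch q (q^(m+2)) (i+(n+1))
                = qPoch q (q^(m+2)) i * qPoch q (q^(m+2+i)) (n+1) := by
              rw [qP_add, ← pow_add]
            have e2 : qPoch q (q^(m+2)) ((n+i)+1)
                = (1-q^(m+2)) * qPoch q (q^(1+(m+2))) (n+i) := by
              rw [qP_succ', show q^(m+2)*q = q^(1+(m+2)) by rw [← pow_succ]; congr 1; omega]
            rw [← e2, ← e1]; congr 1; omega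
          have hPq : qPoch q q i ≠ 0 := qP_q_ne hq hq1 i
          have hPb : qPoch q (q^(1+i)) (n+1) ≠ 0 := hPbne (n+1)
          have hnii : 1 - q^(1+n+i) ≠ 0 := one_sub_ne hq hq1 (by omega)
          rw [show qPoch q (q^(1+(m+2))) (n+i)
              = qPoch q (q^(m+2)) i * qPoch q (q^(m+2+i)) (n+1) / (1-q^(m+2)) from by
                rw [eq_div_iff hjne, ← hR1]; ring,
            show qPoch q q (n+i)
              = qPoch q q i * qPoch q (q^(1+i)) (n+1) / (1-q^(1+n+i)) from by
                rw [eq_div_iff hnii, ← hR2]; try ring]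
          field_simp
          ring
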